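/- Let P_peak > 0 and let C : ℝ → ℝ be convex, nondecreasing, nonnegative, and differentiable on the interval [0, P_peak]. Set χ = C(P_peak) + P_peak·C′(P_peak). Then for all 0 ≤ P₁ ≤ P₂ ≤ P_peak: P₁·(−χ + C(P₁)) ≥ P₂·(−χ + C(P₂)); that is, the function P ↦ P·(C(P) − χ) is nonincreasing on [0, P_peak]. -/
import Mathlib

/-- Section III-C claim: if the per-unit cost `C` is convex, nondecreasing,
nonnegative and differentiable on `[0, Ppeak]`, then
`χ = C(Ppeak) + Ppeak * C'(Ppeak)` satisfies the defining inequality (10),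
i.e. `P ↦ P * (C P - χ)` is nonincreasing on `[0, Ppeak]`. -/
theorem stmt_4
    (Ppeak : ℝ) (hPpeak : 0 < Ppeak)
    (C C' : ℝ → ℝ)
    (hconv : ConvexOn ℝ (Set.Icc 0 Ppeak) C)
    (hmono : MonotoneOn C (Set.Icc 0 Ppeak))
    (hnonneg : ∀ x ∈ Set.Icc (0 : ℝ) Ppeak, 0 ≤ C x)
    (hderiv : ∀ x ∈ Set.Icc (0 : ℝ) Ppeak,
      HasDerivWithinAt C (C' x) (Set.Icc 0 Ppeak) x) :
    ∀ P₁ P₂ : ℝ, 0 ≤ P₁ → P₁ ≤ P₂ → P₂ ≤ Ppeak →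
      P₁ * (-(C Ppeak + Ppeak * C' Ppeak) + C P₁) ≥
        P₂ * (-(C Ppeak + Ppeak * C' Ppeak) + C P₂) := by
  intro P₁ P₂ h1 h12 h2
  set χ : ℝ := C Ppeak + Ppeak * C' Ppeak with hχ
  have hpeak_mem : Ppeak ∈ Set.Icc (0 : ℝ) Ppeak := ⟨hPpeak.le, le_refl _⟩
  have hanti : AntitoneOn (fun x => x * (-χ + C x)) (Set.Icc 0 Ppeak) := by
    apply antitoneOn_of_deriv_nonpos (convex_Icc 0 Ppeak)
    · exact continuousOn_id.mul (continuousOn_const.add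
        (fun x hx => (hderiv x hx).continuousWithinAt))
    · intro x hx
      rw [interior_Icc] at hx
      have hxm : x ∈ Set.Icc (0 : ℝ) Ppeak := Set.Ioo_subset_Icc_self hx
      have hC : HasDerivAt C (C' x) x :=
        (hderiv x hxm).hasDerivAt (Icc_mem_nhds hx.1 hx.2)
      exact (((hasDerivAt_id x).mul ((hasDerivAt_const x (-χ)).add hC)).differentiableAt).differentiableWithinAt
    · intro x hx
      rw [interior_Icc] at hx
      have hxm : x ∈ Set.Icc (0 : ℝ) Ppeak := Set.Ioo_subset_Icc_self hx
      have hC : HasDerivAt C (C' x) x :=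
        (hderiv x hxm).hasDerivAt (Icc_mem_nhds hx.1 hx.2)
      have hf : HasDerivAt (fun x => x * (-χ + C x))
          (1 * (-χ + C x) + x * (0 + C' x)) x :=
        (hasDerivAt_id x).mul ((hasDerivAt_const x (-χ)).add hC)
      rw [hf.deriv]
      -- bounds on C' x
      have hslope1 : C' x ≤ slope C x Ppeak :=
        hconv.le_slope_of_hasDerivWithinAt hxm hpeak_mem hx.2 (hderiv x hxm)
      have hslope2 : slope C x Ppeak ≤ C' Ppeak :=
        hconv.slope_le_of_hasDerivWithinAt hxm hpeak_mem hx.2 (hderiv Ppeak hpeak_mem)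
      have hC'le : C' x ≤ C' Ppeak := hslope1.trans hslope2
      have hC'nonneg : 0 ≤ C' x := by
        have h0 : (0 : ℝ) ∈ Set.Icc (0 : ℝ) Ppeak := ⟨le_refl _, hPpeak.le⟩
        have hsl : slope C 0 x ≤ C' x :=
          hconv.slope_le_of_hasDerivWithinAt h0 hxm hx.1 (hderiv x hxm)
        refine le_trans ?_ hsl
        rw [slope_def_field]
        have : C 0 ≤ C x := hmono h0 hxm hx.1.le
        have hx0 : 0 < x := hx.1
        rw [sub_zero]; exact div_nonneg (sub_nonneg.mpr this) hx0.le
      have hCx : C x ≤ C Ppeak := hmono hxm hpeak_mem hx.2.le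
      have hxC' : x * C' x ≤ Ppeak * C' Ppeak := by
        have h1 : x * C' x ≤ x * C' Ppeak :=
          mul_le_mul_of_nonneg_left hC'le hx.1.le
        have h2 : x * C' Ppeak ≤ Ppeak * C' Ppeak :=
          mul_le_mul_of_nonneg_right hx.2.le (hC'nonneg.trans hC'le)
        exact h1.trans h2
      nlinarith
  exact hanti ⟨h1, h12.trans h2⟩ ⟨h1.trans h12, h2⟩ h12
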